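/- Gibbs variational principle (Legendre transform of the von Neumann entropy): let ι be a finite nonempty type, G : Matrix ι ι ℂ Hermitian, and define J(G) = -Real.log ((Matrix.trace (exp (-G))).re). Then for every density matrix ρ on ι, J(G) + S(ρ) ≤ (Matrix.trace (ρ * G)).re, and equality holds if and only if ρ = (tr (exp (-G)))⁻¹ • exp (-G). -/

import Mathlib

open Matrix Kronecker
open scoped ComplexOrder

noncomputable section

/-- A density matrix: positive semidefinite with trace 1. -/
def IsDensityMatrix {ι : Type*} [Fintype ι] (ρ : Matrix ι ι ℂ) : Prop :=
  ρ.PosSemidef ∧ ρ.trace = 1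

/-- The matrix exponential. -/
noncomputable def mexp {ι : Type*} [Fintype ι] [DecidableEq ι] (M : Matrix ι ι ℂ) :
    Matrix ι ι ℂ :=
  NormedSpace.exp M

/-- Von Neumann entropy of a (Hermitian) matrix, via its eigenvalues. -/
noncomputable def vnEntropy {ι : Type*} [Fintype ι] [DecidableEq ι] (ρ : Matrix ι ι ℂ) : ℝ :=
  if h : ρ.IsHermitian then -∑ i, h.eigenvalues i * Real.log (h.eigenvalues i) else 0

/-- The Gibbs state of the Hamiltonian `H` at inverse temperature `b`. -/
noncomputable def gibbs {ι : Type*} [Fintype ι] [DecidableEq ι] (H : Matrix ι ι ℂ) (b : ℝ) :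
    Matrix ι ι ℂ :=
  (Matrix.trace (mexp (-b • H)))⁻¹ • mexp (-b • H)

/-- Equilibrium energy of the bath. -/
noncomputable def eqEnergy {ι : Type*} [Fintype ι] [DecidableEq ι] (H : Matrix ι ι ℂ) (b : ℝ) : ℝ :=
  (Matrix.trace (gibbs H b * H)).re

/-- Partial trace over the second (bath) factor. -/
def ptraceB {A B : Type*} [Fintype B] (M : Matrix (A × B) (A × B) ℂ) : Matrix A A ℂ :=
  Matrix.of fun a a' => ∑ k : B, M (a, k) (a', k)

/-- Partial trace over the first (device) factor. -/
def ptraceA {A B : Type*} [Fintype A] (M : Matrix (A × B) (A × B) ℂ) : Matrix B B ℂ :=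
  Matrix.of fun k k' => ∑ a : A, M (a, k) (a, k')

/-- The heat transfer operator of a realization setup. -/
noncomputable def hto {A B : Type*} [Fintype A] [DecidableEq A] [Fintype B] [DecidableEq B]
    (H_B : Matrix B B ℂ) (b : ℝ) (U : Matrix (A × B) (A × B) ℂ) : Matrix A A ℂ :=
  ptraceB (((1 : Matrix A A ℂ) ⊗ₖ gibbs H_B b) * Uᴴ * ((1 : Matrix A A ℂ) ⊗ₖ H_B) * U)
    - eqEnergy H_B b • (1 : Matrix A A ℂ)

/-- Matrix logarithm of a Hermitian matrix through the continuous functional calculus. -/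
noncomputable def mlog {ι : Type*} [Fintype ι] [DecidableEq ι] (ρ : Matrix ι ι ℂ) :
    Matrix ι ι ℂ :=
  if h : ρ.IsHermitian then h.cfc Real.log else 0

/-- Quantum relative entropy `S(σ‖ρ)`. -/
noncomputable def relEntropy {ι : Type*} [Fintype ι] [DecidableEq ι] (σ ρ : Matrix ι ι ℂ) : ℝ :=
  (Matrix.trace (σ * (mlog σ - mlog ρ))).re

end

private lemma klein_term {p q : ℝ} (hp : 0 ≤ p) (hq : 0 < q) :
    p - q ≤ p * Real.log p - p * Real.log q ∧
    (p - q = p * Real.log p - p * Real.log q ↔ p = q) := by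
  rcases eq_or_lt_of_le hp with h0 | h0
  · subst h0
    refine ⟨by simp; linarith, ?_, ?_⟩
    · intro h
      simp only [Real.log_zero, mul_zero, zero_mul, sub_zero, zero_sub] at h
      linarith
    · intro h
      simp [← h]
  · have hlog : Real.log (q / p) ≤ q / p - 1 := Real.log_le_sub_one_of_pos (div_pos hq h0)
    have hpq : p * (q / p) = q := by field_simp
    have hld : Real.log (q / p) = Real.log q - Real.log p := Real.log_div hq.ne' h0.ne'
    have key : p * Real.log q - p * Real.log p ≤ q - p := by
      have := mul_le_mul_of_nonneg_left hlog h0.le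
      rw [mul_sub, mul_one, hpq, hld, mul_sub] at this
      linarith
    refine ⟨by linarith, ?_, ?_⟩
    · intro h
      by_contra hne
      have h1 : q / p ≠ 1 := by
        intro hh
        rw [div_eq_one_iff_eq h0.ne'] at hh
        exact hne hh.symm
      have := mul_lt_mul_of_pos_left (Real.log_lt_sub_one_of_pos (div_pos hq h0) h1) h0
      rw [mul_sub, mul_one, hpq, hld, mul_sub] at this
      linarith
    · intro h; subst h; simp


/-- Gibbs variational principle (Legendre transform of the von Neumann entropy). -/
theorem gibbs_variational_principle
    {ι : Type*} [Fintype ι] [DecidableEq ι] [Nonempty ι]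
    (G : Matrix ι ι ℂ) (hG : G.IsHermitian)
    (ρ : Matrix ι ι ℂ) (hρ : IsDensityMatrix ρ) :
    -Real.log ((Matrix.trace (mexp (-G))).re) + vnEntropy ρ ≤ (Matrix.trace (ρ * G)).re ∧
    (-Real.log ((Matrix.trace (mexp (-G))).re) + vnEntropy ρ = (Matrix.trace (ρ * G)).re ↔
      ρ = (Matrix.trace (mexp (-G)))⁻¹ • mexp (-G)) := by
  classical
  obtain ⟨hpsd, htrρ⟩ := hρ
  have hρH : ρ.IsHermitian := hpsd.1
  set U : Matrix ι ι ℂ := (hρH.eigenvectorUnitary : Matrix ι ι ℂ) with hUdef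
  set V : Matrix ι ι ℂ := (hG.eigenvectorUnitary : Matrix ι ι ℂ) with hVdef
  set p : ι → ℝ := hρH.eigenvalues with hpdef
  set lam : ι → ℝ := hG.eigenvalues with hlamdef
  have hUUs : star U * U = 1 := (Unitary.mem_iff.mp hρH.eigenvectorUnitary.2).1
  have hUsU : U * star U = 1 := (Unitary.mem_iff.mp hρH.eigenvectorUnitary.2).2
  have hVVs : star V * V = 1 := (Unitary.mem_iff.mp hG.eigenvectorUnitary.2).1
  have hVsV : V * star V = 1 := (Unitary.mem_iff.mp hG.eigenvectorUnitary.2).2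
  have cUl : ∀ X : Matrix ι ι ℂ, star U * (U * X) = X := fun X => by
    rw [← mul_assoc, hUUs, one_mul]
  have cVl : ∀ X : Matrix ι ι ℂ, star V * (V * X) = X := fun X => by
    rw [← mul_assoc, hVVs, one_mul]
  set W : Matrix ι ι ℂ := star U * V with hWdef
  have hWstar : star W = star V * U := by rw [hWdef, Matrix.star_mul, star_star]
  have hWWs : W * star W = 1 := by
    rw [hWdef, hWstar, mul_assoc, ← mul_assoc V, hVsV, one_mul, hUUs]
  have hWsW : star W * W = 1 := by
    rw [hWdef, hWstar, mul_assoc, ← mul_assoc U, hUsU, one_mul, hVVs]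
  set c : ι → ι → ℝ := fun i j => Complex.normSq (W i j) with hcdef
  have hc_nonneg : ∀ i j, 0 ≤ c i j := fun i j => Complex.normSq_nonneg _
  have hterm : ∀ i j, W i j * star (W i j) = (c i j : ℂ) := fun i j => by
    rw [hcdef, RCLike.star_def, Complex.mul_conj]
  have hrow : ∀ i, ∑ j, c i j = 1 := by
    intro i
    have h1 : (W * star W) i i = 1 := by rw [hWWs]; simp [Matrix.one_apply]
    rw [Matrix.mul_apply] at h1
    simp only [Matrix.star_apply, ← RCLike.star_def, hterm] at h1
    exact_mod_cast h1
  have hcol : ∀ j, ∑ i, c i j = 1 := by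
    intro j
    have h1 : (star W * W) j j = 1 := by rw [hWsW]; simp [Matrix.one_apply]
    rw [Matrix.mul_apply] at h1
    have : ∀ i, (star W) j i * W i j = (c i j : ℂ) := fun i => by
      rw [Matrix.star_apply, mul_comm, hterm]
    simp only [this] at h1
    exact_mod_cast h1
  have hρspec : ρ = U * diagonal (fun i => (p i : ℂ)) * star U := hρH.spectral_theorem
  have hGspec : G = V * diagonal (fun j => (lam j : ℂ)) * star V := hG.spectral_theorem
  -- exponential
  have hVinv : V⁻¹ = star V := Matrix.inv_eq_left_inv hVVs
  have hVunit : IsUnit V := ⟨⟨V, star V, hVsV, hVVs⟩, rfl⟩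
  have hexp : mexp (-G) = V * diagonal (fun j => (Real.exp (-lam j) : ℂ)) * star V := by
    have hd : diagonal (fun j => ((-lam j : ℝ) : ℂ)) = -diagonal (fun j => (lam j : ℂ)) := by
      ext i j
      by_cases h : i = j <;> simp [Matrix.diagonal_apply, h]
    have hnegG : -G = V * diagonal (fun j => ((-lam j : ℝ) : ℂ)) * V⁻¹ := by
      rw [hVinv, hd, hGspec]
      noncomm_ring
    rw [mexp, hnegG, Matrix.exp_conj _ _ hVunit, Matrix.exp_diagonal, Pi.exp_def, hVinv]
    simp only [← Complex.exp_eq_exp_ℂ, ← Complex.ofReal_exp]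
  set Z : ℝ := ∑ j, Real.exp (-lam j) with hZdef
  have hZpos : 0 < Z := Finset.sum_pos (fun j _ => Real.exp_pos _) Finset.univ_nonempty
  have htrexp : Matrix.trace (mexp (-G)) = (Z : ℂ) := by
    rw [hexp, Matrix.trace_mul_cycle, hVVs, one_mul, Matrix.trace_diagonal, hZdef]
    push_cast
    rfl
  have htrexp_re : (Matrix.trace (mexp (-G))).re = Z := by rw [htrexp, Complex.ofReal_re]
  set q : ι → ℝ := fun j => Real.exp (-lam j) / Z with hqdef
  have hq_pos : ∀ j, 0 < q j := fun j => div_pos (Real.exp_pos _) hZpos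
  have hlogq : ∀ j, Real.log (q j) = -lam j - Real.log Z := fun j => by
    rw [hqdef]
    simp only
    rw [Real.log_div (Real.exp_pos _).ne' hZpos.ne', Real.log_exp]
  have hq_sum : ∑ j, q j = 1 := by
    rw [hqdef]
    simp only
    rw [← Finset.sum_div, ← hZdef, div_self hZpos.ne']
  have hp_nonneg : ∀ i, 0 ≤ p i := fun i => hpsd.eigenvalues_nonneg i
  have hp_sum : ∑ i, p i = 1 := by
    have h1 : Matrix.trace ρ = ∑ i, (p i : ℂ) := by
      rw [hρspec, Matrix.trace_mul_cycle, hUUs, one_mul, Matrix.trace_diagonal]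
    rw [htrρ] at h1
    exact_mod_cast h1.symm
  -- trace of ρ * G
  have htrρG : (Matrix.trace (ρ * G)).re = ∑ i, ∑ j, p i * lam j * c i j := by
    have hconj : star U * (ρ * G) * U
        = diagonal (fun i => (p i : ℂ)) * W * diagonal (fun j => (lam j : ℂ)) * star W := by
      rw [hρspec, hGspec, hWdef, hWstar]
      simp only [mul_assoc, cUl, cVl]
    have htr1 : Matrix.trace (ρ * G)
        = Matrix.trace (diagonal (fun i => (p i : ℂ)) * W * diagonal (fun j => (lam j : ℂ))
            * star W) := by
      rw [← hconj, Matrix.trace_mul_cycle, hUsU, one_mul]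
    have h2 : Matrix.trace (diagonal (fun i => (p i : ℂ)) * W * diagonal (fun j => (lam j : ℂ))
        * star W) = ∑ i, ∑ j, ((p i * lam j * c i j : ℝ) : ℂ) := by
      rw [Matrix.trace]
      refine Finset.sum_congr rfl fun i _ => ?_
      rw [Matrix.diag_apply, Matrix.mul_apply]
      refine Finset.sum_congr rfl fun j _ => ?_
      rw [Matrix.mul_diagonal, Matrix.diagonal_mul, Matrix.star_apply,
        show (p i : ℂ) * W i j * (lam j : ℂ) * star (W i j)
          = (p i : ℂ) * (lam j : ℂ) * (W i j * star (W i j)) from by ring, hterm]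
      push_cast
      ring
    have hcast : (∑ i, ∑ j, ((p i * lam j * c i j : ℝ) : ℂ))
        = ((∑ i, ∑ j, p i * lam j * c i j : ℝ) : ℂ) := by push_cast; rfl
    rw [htr1, h2, hcast, Complex.ofReal_re]
  -- entropy
  have hS : vnEntropy ρ = -∑ i, p i * Real.log (p i) := by
    rw [vnEntropy, dif_pos hρH]
  -- the two double sums
  set F : ι → ι → ℝ := fun i j => c i j * (p i * Real.log (p i) - p i * Real.log (q j))
    with hFdef
  set L : ι → ι → ℝ := fun i j => c i j * (p i - q j) with hLdef
  have hpt : ∀ i j, L i j ≤ F i j := fun i j =>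
    mul_le_mul_of_nonneg_left (klein_term (hp_nonneg i) (hq_pos j)).1 (hc_nonneg i j)
  have hLsum : ∑ i, ∑ j, L i j = 0 := by
    have e1 : ∑ i, ∑ j, c i j * p i = 1 := by
      calc ∑ i, ∑ j, c i j * p i = ∑ i, (∑ j, c i j) * p i := by
            simp [Finset.sum_mul]
        _ = ∑ i, p i := by
            refine Finset.sum_congr rfl fun i _ => ?_
            rw [hrow, one_mul]
        _ = 1 := hp_sum
    have e2 : ∑ i, ∑ j, c i j * q j = 1 := by
      rw [Finset.sum_comm]
      calc ∑ j, ∑ i, c i j * q j = ∑ j, (∑ i, c i j) * q j := by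
            simp [Finset.sum_mul]
        _ = ∑ j, q j := by
            refine Finset.sum_congr rfl fun j _ => ?_
            rw [hcol, one_mul]
        _ = 1 := hq_sum
    have : ∑ i, ∑ j, L i j = (∑ i, ∑ j, c i j * p i) - ∑ i, ∑ j, c i j * q j := by
      simp only [hLdef, mul_sub, Finset.sum_sub_distrib]
    rw [this, e1, e2, sub_self]
  have hFsum : ∑ i, ∑ j, F i j
      = (Matrix.trace (ρ * G)).re
        - (-Real.log ((Matrix.trace (mexp (-G))).re) + vnEntropy ρ) := by
    have expand : ∀ i j, F i j = c i j * (p i * Real.log (p i)) + c i j * (p i * lam j)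
        + c i j * (p i * Real.log Z) := by
      intro i j
      simp only [hFdef]
      rw [hlogq j]
      ring
    have k1 : ∑ i, ∑ j, c i j * (p i * Real.log (p i)) = ∑ i, p i * Real.log (p i) := by
      refine Finset.sum_congr rfl fun i _ => ?_
      rw [← Finset.sum_mul, hrow, one_mul]
    have k2 : ∑ i, ∑ j, c i j * (p i * lam j) = ∑ i, ∑ j, p i * lam j * c i j :=
      Finset.sum_congr rfl fun i _ => Finset.sum_congr rfl fun j _ => by ring
    have k3 : ∑ i, ∑ j, c i j * (p i * Real.log Z) = Real.log Z := by
      have : ∑ i, ∑ j, c i j * (p i * Real.log Z) = ∑ i, p i * Real.log Z := by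
        refine Finset.sum_congr rfl fun i _ => ?_
        rw [← Finset.sum_mul, hrow, one_mul]
      rw [this, ← Finset.sum_mul, hp_sum, one_mul]
    calc ∑ i, ∑ j, F i j
        = (∑ i, ∑ j, c i j * (p i * Real.log (p i)))
          + (∑ i, ∑ j, c i j * (p i * lam j))
          + ∑ i, ∑ j, c i j * (p i * Real.log Z) := by
          simp only [expand, Finset.sum_add_distrib]
      _ = (∑ i, p i * Real.log (p i)) + (∑ i, ∑ j, p i * lam j * c i j) + Real.log Z := by
          rw [k1, k2, k3]
      _ = (Matrix.trace (ρ * G)).re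
          - (-Real.log ((Matrix.trace (mexp (-G))).re) + vnEntropy ρ) := by
          rw [htrρG, hS, htrexp_re]
          ring
  have hmain : (0:ℝ) ≤ ∑ i, ∑ j, F i j := by
    rw [← hLsum]
    exact Finset.sum_le_sum fun i _ => Finset.sum_le_sum fun j _ => hpt i j
  refine ⟨by linarith, ?_⟩
  -- the Gibbs state
  have hσ : (Matrix.trace (mexp (-G)))⁻¹ • mexp (-G)
      = V * diagonal (fun j => (q j : ℂ)) * star V := by
    have hdq : (Z : ℂ)⁻¹ • diagonal (fun j => (Real.exp (-lam j) : ℂ))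
        = diagonal (fun j => (q j : ℂ)) := by
      ext i j
      by_cases h : i = j <;>
        simp [Matrix.diagonal_apply, h, hqdef, div_eq_inv_mul]
    rw [htrexp, hexp, ← hdq, Matrix.mul_smul, Matrix.smul_mul]
  -- term-by-term equality conditions
  have cond_iff : ∀ i j, (L i j = F i j ↔ (p i : ℂ) * W i j = W i j * (q j : ℂ)) := by
    intro i j
    constructor
    · intro h
      rcases eq_or_ne (W i j) 0 with h0 | h0
      · rw [h0, mul_zero, zero_mul]
      · have hc0 : c i j ≠ 0 := by
          simp only [hcdef]
          exact fun hh => h0 (Complex.normSq_eq_zero.mp hh)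
        have h1 : p i - q j = p i * Real.log (p i) - p i * Real.log (q j) := by
          simp only [hLdef, hFdef] at h
          exact mul_left_cancel₀ hc0 h
        have h2 : p i = q j := (klein_term (hp_nonneg i) (hq_pos j)).2.mp h1
        rw [h2, mul_comm]
    · intro h
      rcases eq_or_ne (W i j) 0 with h0 | h0
      · have hc0 : c i j = 0 := by simp [hcdef, h0]
        simp only [hLdef, hFdef, hc0, zero_mul]
      · have h1 : (p i : ℂ) * W i j = (q j : ℂ) * W i j := by rw [h, mul_comm]
        have h2 : (p i : ℂ) = (q j : ℂ) := mul_right_cancel₀ h0 h1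
        have h3 : p i = q j := by exact_mod_cast h2
        have h4 : p i - q j = p i * Real.log (p i) - p i * Real.log (q j) :=
          (klein_term (hp_nonneg i) (hq_pos j)).2.mpr h3
        simp only [hLdef, hFdef, h4]
  have hDW_iff : (∀ i j, L i j = F i j) ↔
      diagonal (fun i => (p i : ℂ)) * W = W * diagonal (fun j => (q j : ℂ)) := by
    constructor
    · intro h
      ext i j
      rw [Matrix.diagonal_mul, Matrix.mul_diagonal]
      exact (cond_iff i j).mp (h i j)
    · intro h i j
      refine (cond_iff i j).mpr ?_
      have := congrFun (congrFun h i) j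
      rwa [Matrix.diagonal_mul, Matrix.mul_diagonal] at this
  have hW_UV : U * W = V := by rw [hWdef, ← mul_assoc, hUsU, one_mul]
  have hUsV : star U = W * star V := by rw [hWdef, mul_assoc, hVsV, mul_one]
  constructor
  · intro heq
    -- equality of sums forces term-by-term equality
    have hsum_eq : ∑ i, ∑ j, L i j = ∑ i, ∑ j, F i j := by
      rw [hLsum, hFsum, heq, sub_self]
    have houter : ∀ i ∈ Finset.univ, ∑ j, L i j = ∑ j, F i j :=
      (Finset.sum_eq_sum_iff_of_le
        (fun i _ => Finset.sum_le_sum fun j _ => hpt i j)).mp hsum_eq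
    have hterms : ∀ i j, L i j = F i j := fun i j =>
      (Finset.sum_eq_sum_iff_of_le (fun j _ => hpt i j)).mp
        (houter i (Finset.mem_univ i)) j (Finset.mem_univ j)
    have hkey := hDW_iff.mp hterms
    rw [hσ]
    calc ρ = U * diagonal (fun i => (p i : ℂ)) * star U := hρspec
      _ = U * (diagonal (fun i => (p i : ℂ)) * W) * star V := by
          rw [hUsV, ← mul_assoc, mul_assoc U]
      _ = U * (W * diagonal (fun j => (q j : ℂ))) * star V := by rw [hkey]
      _ = (U * W) * diagonal (fun j => (q j : ℂ)) * star V := by rw [← mul_assoc]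
      _ = V * diagonal (fun j => (q j : ℂ)) * star V := by rw [hW_UV]
  · intro heq
    have hρV : ρ = V * diagonal (fun j => (q j : ℂ)) * star V := by rw [heq, hσ]
    have e1 : diagonal (fun i => (p i : ℂ)) * W = star U * ρ * V := by
      rw [hρspec, hWdef]
      simp only [mul_assoc, cUl]
    have e2 : W * diagonal (fun j => (q j : ℂ)) = star U * ρ * V := by
      rw [hρV, hWdef]
      simp only [mul_assoc]
      rw [hVVs, mul_one]
    have hterms : ∀ i j, L i j = F i j := hDW_iff.mpr (e1.trans e2.symm)
    have hsum_eq : ∑ i, ∑ j, F i j = 0 := by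
      rw [← hLsum]
      exact (Finset.sum_congr rfl fun i _ => Finset.sum_congr rfl fun j _ =>
        (hterms i j)).symm
    linarith [hFsum, hsum_eq]
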